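/- A β-redex position C in a λ-term t is the leftmost-outermost β-redex of t if and only if C is an inductive leftmost-outermost (iLOβ) context, where iLOβ contexts are generated by: ⟨·⟩ is iLOβ; if C is iLOβ and C is not an abstraction context λx.D then C t is iLOβ; if C is iLOβ then λx.C is iLOβ; if t is neutral and C is iLOβ then t C is iLOβ. -/
import Mathlib


/-- Pure λ-terms. -/
inductive Term : Type
  | var : ℕ → Term
  | lam : ℕ → Term → Term
  | app : Term → Term → Term
  deriving DecidableEq

/-- Meta-level substitution (assuming Barendregt's convention). -/
def Term.subst (x : ℕ) (u : Term) : Term → Term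
  | var y => if y = x then u else var y
  | lam y t => if y = x then lam y t else lam y (subst x u t)
  | app t r => app (subst x u t) (subst x u r)

/-- β-reduction, closed under all contexts. -/
inductive Beta : Term → Term → Prop
  | beta (x : ℕ) (t u : Term) : Beta (.app (.lam x t) u) (t.subst x u)
  | lam (x : ℕ) {t t' : Term} : Beta t t' → Beta (.lam x t) (.lam x t')
  | appL {t t' : Term} (u : Term) : Beta t t' → Beta (.app t u) (.app t' u)
  | appR (t : Term) {u u' : Term} : Beta u u' → Beta (.app t u) (.app t u')

/-- β-normal terms. -/
def BetaNormal (t : Term) : Prop := ∀ u, ¬ Beta t u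

/-- Neutral terms: β-normal and not an abstraction. -/
def Neutral (t : Term) : Prop := BetaNormal t ∧ ∀ (x : ℕ) (b : Term), t ≠ .lam x b

/-- One-hole contexts of the λ-calculus. -/
inductive Ctx : Type
  | hole : Ctx
  | lam : ℕ → Ctx → Ctx
  | appL : Ctx → Term → Ctx
  | appR : Term → Ctx → Ctx

/-- Plugging a term into a context. -/
def Ctx.plug : Ctx → Term → Term
  | hole, t => t
  | lam x C, t => .lam x (C.plug t)
  | appL C u, t => .app (C.plug t) u
  | appR u C, t => .app u (C.plug t)

/-- Plugging a context into a context. -/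
def Ctx.comp : Ctx → Ctx → Ctx
  | hole, D => D
  | lam x C, D => lam x (C.comp D)
  | appL C u, D => appL (C.comp D) u
  | appR u C, D => appR u (C.comp D)

/-- `C` is a prefix of (a position in) the term `t`. -/
def Ctx.IsPrefix (C : Ctx) (t : Term) : Prop := ∃ u, C.plug u = t

/-- The outside-in order on contexts. -/
inductive PrecO : Ctx → Ctx → Prop
  | root {C : Ctx} : C ≠ .hole → PrecO .hole C
  | closure (E : Ctx) {C D : Ctx} : PrecO C D → PrecO (E.comp C) (E.comp D)

/-- The left-to-right order on contexts. -/
inductive PrecL : Ctx → Ctx → Prop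
  | app {C D : Ctx} {t u : Term} : C.IsPrefix t → D.IsPrefix u →
      PrecL (.appL C u) (.appR t D)
  | closure (E : Ctx) {C D : Ctx} : PrecL C D → PrecL (E.comp C) (E.comp D)

/-- The left-to-right outside-in order. -/
def PrecLO (C D : Ctx) : Prop := PrecO C D ∨ PrecL C D

/-- `C` is the position of a β-redex of `t`. -/
def IsRedexPos (C : Ctx) (t : Term) : Prop :=
  ∃ (x : ℕ) (b a : Term), t = C.plug (.app (.lam x b) a)

/-- Inductive leftmost-outermost (iLOβ) contexts. -/
inductive ILOb : Ctx → Prop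
  | hole : ILOb .hole
  | appL {C : Ctx} (t : Term) : ILOb C → (∀ (x : ℕ) (D : Ctx), C ≠ .lam x D) →
      ILOb (.appL C t)
  | lam (x : ℕ) {C : Ctx} : ILOb C → ILOb (.lam x C)
  | appR {t : Term} {C : Ctx} : Neutral t → ILOb C → ILOb (.appR t C)

section Aux

lemma beta_plug (C : Ctx) {u u' : Term} (h : Beta u u') : Beta (C.plug u) (C.plug u') := by
  induction C with
  | hole => exact h
  | lam x C ih => exact Beta.lam x ih
  | appL C t ih => exact Beta.appL t ih
  | appR t C ih => exact Beta.appR t ih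

lemma exists_redex_of_beta {s s' : Term} (h : Beta s s') :
    ∃ (C : Ctx) (x : ℕ) (b a : Term), s = C.plug (.app (.lam x b) a) := by
  induction h with
  | beta x t u => exact ⟨.hole, x, t, u, rfl⟩
  | lam x _ ih =>
    obtain ⟨C, y, b, a, rfl⟩ := ih; exact ⟨.lam x C, y, b, a, rfl⟩
  | appL u _ ih =>
    obtain ⟨C, y, b, a, rfl⟩ := ih; exact ⟨.appL C u, y, b, a, rfl⟩
  | appR t _ ih =>
    obtain ⟨C, y, b, a, rfl⟩ := ih; exact ⟨.appR t C, y, b, a, rfl⟩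

lemma precO_inv {C D : Ctx} (h : PrecO C D) :
    (C = .hole ∧ D ≠ .hole) ∨
    (∃ x C' D', C = .lam x C' ∧ D = .lam x D' ∧ PrecO C' D') ∨
    (∃ u C' D', C = .appL C' u ∧ D = .appL D' u ∧ PrecO C' D') ∨
    (∃ s C' D', C = .appR s C' ∧ D = .appR s D' ∧ PrecO C' D') := by
  induction h with
  | root h => exact Or.inl ⟨rfl, h⟩
  | closure E h ih =>
    cases E with
    | hole => exact ih
    | lam x E' => exact Or.inr (Or.inl ⟨x, _, _, rfl, rfl, PrecO.closure E' h⟩)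
    | appL E' u => exact Or.inr (Or.inr (Or.inl ⟨u, _, _, rfl, rfl, PrecO.closure E' h⟩))
    | appR s E' => exact Or.inr (Or.inr (Or.inr ⟨s, _, _, rfl, rfl, PrecO.closure E' h⟩))

lemma precL_inv {C D : Ctx} (h : PrecL C D) :
    (∃ C' D' t u, C = .appL C' u ∧ D = .appR t D' ∧ C'.IsPrefix t ∧ D'.IsPrefix u) ∨
    (∃ x C' D', C = .lam x C' ∧ D = .lam x D' ∧ PrecL C' D') ∨
    (∃ u C' D', C = .appL C' u ∧ D = .appL D' u ∧ PrecL C' D') ∨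
    (∃ s C' D', C = .appR s C' ∧ D = .appR s D' ∧ PrecL C' D') := by
  induction h with
  | app h1 h2 => exact Or.inl ⟨_, _, _, _, rfl, rfl, h1, h2⟩
  | closure E h ih =>
    cases E with
    | hole => exact ih
    | lam x E' => exact Or.inr (Or.inl ⟨x, _, _, rfl, rfl, PrecL.closure E' h⟩)
    | appL E' u => exact Or.inr (Or.inr (Or.inl ⟨u, _, _, rfl, rfl, PrecL.closure E' h⟩))
    | appR s E' => exact Or.inr (Or.inr (Or.inr ⟨s, _, _, rfl, rfl, PrecL.closure E' h⟩))

lemma not_precLO_hole {C : Ctx} : ¬ PrecLO C .hole := by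
  rintro (h | h)
  · rcases precO_inv h with ⟨-, h⟩ | ⟨_, _, _, -, h, -⟩ | ⟨_, _, _, -, h, -⟩ | ⟨_, _, _, -, h, -⟩ <;>
      simp at h
  · rcases precL_inv h with ⟨_, _, _, _, -, h, -⟩ | ⟨_, _, _, -, h, -⟩ | ⟨_, _, _, -, h, -⟩ |
      ⟨_, _, _, -, h, -⟩ <;> simp at h

lemma not_precLO_appR_appL {s : Term} {C D : Ctx} {u : Term} :
    ¬ PrecLO (.appR s C) (.appL D u) := by
  rintro (h | h)
  · rcases precO_inv h with ⟨h, -⟩ | ⟨_, _, _, h, -⟩ | ⟨_, _, _, h, -⟩ | ⟨_, _, _, -, h, -⟩ <;>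
      simp at h
  · rcases precL_inv h with ⟨_, _, _, _, h, -⟩ | ⟨_, _, _, h, -⟩ | ⟨_, _, _, h, -⟩ |
      ⟨_, _, _, -, h, -⟩ <;> simp at h

lemma precLO_lam_inv {x : ℕ} {C D : Ctx} (h : PrecLO (.lam x C) (.lam x D)) : PrecLO C D := by
  rcases h with h | h
  · rcases precO_inv h with ⟨h, -⟩ | ⟨y, C', D', h1, h2, h3⟩ | ⟨_, _, _, h, -⟩ | ⟨_, _, _, h, -⟩
    · simp at h
    · obtain ⟨rfl, rfl⟩ := Ctx.lam.inj h1
      obtain ⟨-, rfl⟩ := Ctx.lam.inj h2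
      exact Or.inl h3
    · simp at h
    · simp at h
  · rcases precL_inv h with ⟨_, _, _, _, h, -⟩ | ⟨y, C', D', h1, h2, h3⟩ | ⟨_, _, _, h, -⟩ |
      ⟨_, _, _, h, -⟩
    · simp at h
    · obtain ⟨rfl, rfl⟩ := Ctx.lam.inj h1
      obtain ⟨-, rfl⟩ := Ctx.lam.inj h2
      exact Or.inr h3
    · simp at h
    · simp at h

lemma precLO_appL_inv {u : Term} {C D : Ctx} (h : PrecLO (.appL C u) (.appL D u)) :
    PrecLO C D := by
  rcases h with h | h
  · rcases precO_inv h with ⟨h, -⟩ | ⟨_, _, _, h, -⟩ | ⟨v, C', D', h1, h2, h3⟩ | ⟨_, _, _, h, -⟩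
    · simp at h
    · simp at h
    · obtain ⟨rfl, rfl⟩ := Ctx.appL.inj h1
      obtain ⟨rfl, -⟩ := Ctx.appL.inj h2
      exact Or.inl h3
    · simp at h
  · rcases precL_inv h with ⟨_, _, _, _, -, h, -⟩ | ⟨_, _, _, h, -⟩ | ⟨v, C', D', h1, h2, h3⟩ |
      ⟨_, _, _, h, -⟩
    · simp at h
    · simp at h
    · obtain ⟨rfl, rfl⟩ := Ctx.appL.inj h1
      obtain ⟨rfl, -⟩ := Ctx.appL.inj h2
      exact Or.inr h3
    · simp at h

lemma precLO_appR_inv {s : Term} {C D : Ctx} (h : PrecLO (.appR s C) (.appR s D)) :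
    PrecLO C D := by
  rcases h with h | h
  · rcases precO_inv h with ⟨h, -⟩ | ⟨_, _, _, h, -⟩ | ⟨_, _, _, h, -⟩ | ⟨v, C', D', h1, h2, h3⟩
    · simp at h
    · simp at h
    · simp at h
    · obtain ⟨rfl, rfl⟩ := Ctx.appR.inj h1
      obtain ⟨-, rfl⟩ := Ctx.appR.inj h2
      exact Or.inl h3
  · rcases precL_inv h with ⟨_, _, _, _, h, -⟩ | ⟨_, _, _, h, -⟩ | ⟨_, _, _, h, -⟩ |
      ⟨v, C', D', h1, h2, h3⟩
    · simp at h
    · simp at h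
    · simp at h
    · obtain ⟨rfl, rfl⟩ := Ctx.appR.inj h1
      obtain ⟨-, rfl⟩ := Ctx.appR.inj h2
      exact Or.inr h3

lemma precLO_closure (E : Ctx) {C D : Ctx} (h : PrecLO C D) : PrecLO (E.comp C) (E.comp D) := by
  rcases h with h | h
  · exact Or.inl (PrecO.closure E h)
  · exact Or.inr (PrecL.closure E h)

lemma min_to_ilob (C : Ctx) : ∀ t : Term, IsRedexPos C t →
    (∀ D : Ctx, IsRedexPos D t → D = C ∨ PrecLO C D) → ILOb C := by
  induction C with
  | hole => intro _ _ _; exact ILOb.hole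
  | lam x C ih =>
    rintro t ⟨y, b, a, rfl⟩ hmin
    refine ILOb.lam x (ih _ ⟨y, b, a, rfl⟩ ?_)
    rintro D ⟨z, c, d, hD⟩
    rcases hmin (.lam x D) ⟨z, c, d, by simp [Ctx.plug, hD]⟩ with h | h
    · obtain ⟨-, rfl⟩ := Ctx.lam.inj h
      exact Or.inl rfl
    · exact Or.inr (precLO_lam_inv h)
  | appL C u ih =>
    rintro t ⟨y, b, a, rfl⟩ hmin
    have hILO : ILOb C := by
      refine ih _ ⟨y, b, a, rfl⟩ ?_
      rintro D ⟨z, c, d, hD⟩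
      rcases hmin (.appL D u) ⟨z, c, d, by simp [Ctx.plug, hD]⟩ with h | h
      · obtain ⟨rfl, -⟩ := Ctx.appL.inj h
        exact Or.inl rfl
      · exact Or.inr (precLO_appL_inv h)
    refine ILOb.appL u hILO ?_
    rintro z D rfl
    have hred : IsRedexPos .hole (Ctx.plug (.appL (.lam z D) u) (.app (.lam y b) a)) :=
      ⟨z, D.plug (.app (.lam y b) a), u, rfl⟩
    rcases hmin .hole hred with h | h
    · simp at h
    · exact not_precLO_hole h
  | appR s C ih =>
    rintro t ⟨y, b, a, rfl⟩ hmin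
    have hILO : ILOb C := by
      refine ih _ ⟨y, b, a, rfl⟩ ?_
      rintro D ⟨z, c, d, hD⟩
      rcases hmin (.appR s D) ⟨z, c, d, by simp [Ctx.plug, hD]⟩ with h | h
      · obtain ⟨-, rfl⟩ := Ctx.appR.inj h
        exact Or.inl rfl
      · exact Or.inr (precLO_appR_inv h)
    refine ILOb.appR ⟨?_, ?_⟩ hILO
    · intro s' hb
      obtain ⟨D, z, c, d, rfl⟩ := exists_redex_of_beta hb
      have hred : IsRedexPos (.appL D (C.plug (.app (.lam y b) a)))
          (Ctx.plug (.appR (D.plug (.app (.lam z c) d)) C) (.app (.lam y b) a)) :=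
        ⟨z, c, d, rfl⟩
      rcases hmin _ hred with h | h
      · simp at h
      · exact not_precLO_appR_appL h
    · rintro z c rfl
      have hred : IsRedexPos .hole
          (Ctx.plug (.appR (.lam z c) C) (.app (.lam y b) a)) :=
        ⟨z, c, C.plug (.app (.lam y b) a), rfl⟩
      rcases hmin .hole hred with h | h
      · simp at h
      · exact not_precLO_hole h

lemma ilob_to_min {C : Ctx} (hI : ILOb C) : ∀ t : Term, IsRedexPos C t →
    ∀ D : Ctx, IsRedexPos D t → D = C ∨ PrecLO C D := by
  induction hI with
  | hole =>
    intro t _ D _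
    by_cases h : D = Ctx.hole
    · exact Or.inl h
    · exact Or.inr (Or.inl (PrecO.root h))
  | lam x hC ih =>
    rename_i C
    rintro t ⟨y, b, a, rfl⟩ D ⟨z, c, d, hD⟩
    cases D with
    | hole => simp [Ctx.plug] at hD
    | lam w D' =>
      simp only [Ctx.plug, Term.lam.injEq] at hD
      obtain ⟨rfl, hD⟩ := hD
      rcases ih _ ⟨y, b, a, rfl⟩ D' ⟨z, c, d, hD⟩ with h | h
      · exact Or.inl (by rw [h])
      · exact Or.inr (precLO_closure (.lam x .hole) h)
    | appL D' u => simp [Ctx.plug] at hD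
    | appR u D' => simp [Ctx.plug] at hD
  | appL u hC hnl ih =>
    rename_i C
    rintro t ⟨y, b, a, rfl⟩ D ⟨z, c, d, hD⟩
    cases D with
    | hole =>
      simp only [Ctx.plug, Term.app.injEq] at hD
      obtain ⟨h1, -⟩ := hD
      cases C with
      | hole => simp [Ctx.plug] at h1
      | lam w C' => exact absurd rfl (hnl w C')
      | appL C' v => simp [Ctx.plug] at h1
      | appR v C' => simp [Ctx.plug] at h1
    | lam w D' => simp [Ctx.plug] at hD
    | appL D' v =>
      simp only [Ctx.plug, Term.app.injEq] at hD
      obtain ⟨hD, rfl⟩ := hD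
      rcases ih _ ⟨y, b, a, rfl⟩ D' ⟨z, c, d, hD⟩ with h | h
      · exact Or.inl (by rw [h])
      · exact Or.inr (precLO_closure (.appL .hole u) h)
    | appR v D' =>
      simp only [Ctx.plug, Term.app.injEq] at hD
      obtain ⟨rfl, hD⟩ := hD
      exact Or.inr (Or.inr (PrecL.app ⟨_, rfl⟩ ⟨_, hD.symm⟩))
  | appR hn hC ih =>
    rename_i s C
    rintro t ⟨y, b, a, rfl⟩ D ⟨z, c, d, hD⟩
    cases D with
    | hole =>
      simp only [Ctx.plug, Term.app.injEq] at hD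
      exact absurd hD.1 (hn.2 z c)
    | lam w D' => simp [Ctx.plug] at hD
    | appL D' v =>
      simp only [Ctx.plug, Term.app.injEq] at hD
      obtain ⟨hD, -⟩ := hD
      exact absurd (hD ▸ beta_plug D' (Beta.beta z c d)) (hn.1 _)
    | appR v D' =>
      simp only [Ctx.plug, Term.app.injEq] at hD
      obtain ⟨rfl, hD⟩ := hD
      rcases ih _ ⟨y, b, a, rfl⟩ D' ⟨z, c, d, hD⟩ with h | h
      · exact Or.inl (by rw [h])
      · exact Or.inr (precLO_closure (.appR s .hole) h)

end Aux

/-- A β-redex position `C` of `t` is the leftmost-outermost β-redex of `t` (i.e. it is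
≺_LO-smaller than any other β-redex position of `t`) iff `C` is an iLOβ context. -/
theorem lo_redex_iff_ilob (t : Term) (C : Ctx) (hC : IsRedexPos C t) :
    (∀ D : Ctx, IsRedexPos D t → D = C ∨ PrecLO C D) ↔ ILOb C := by
  exact ⟨fun h => min_to_ilob C t hC h, fun h => ilob_to_min h t hC⟩
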